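/- For symmetric PSD matrices S and diagonal matrices D_S ⪯ D_C with positive diagonals, λ₂(D_S^{-1/2} S D_S^{-1/2}) >= λ₂(D_C^{-1/2} S D_C^{-1/2}). -/

import Mathlib

open Matrix BigOperators

/-- The second smallest eigenvalue of a symmetric matrix, via the
Courant–Fischer min-max characterization. -/
noncomputable def lambda2 {ι : Type*} [Fintype ι] (M : Matrix ι ι ℝ) : ℝ :=
  ⨅ U : {U : Submodule ℝ (ι → ℝ) // Module.finrank ℝ U = 2},
    ⨆ x : {x : ι → ℝ // x ∈ U.1 ∧ x ≠ 0},
      (x.1 ⬝ᵥ M.mulVec x.1) / (x.1 ⬝ᵥ x.1)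

section aux
variable {n : ℕ}

private lemma dp_self_pos {x : Fin n → ℝ} (hx : x ≠ 0) : 0 < x ⬝ᵥ x := by
  rcases lt_or_eq_of_le (Finset.sum_nonneg fun i _ => mul_self_nonneg (x i) :
      (0:ℝ) ≤ x ⬝ᵥ x) with h | h
  · exact h
  · exact absurd (dotProduct_self_eq_zero.mp h.symm) hx

private lemma quad_eq (d : Fin n → ℝ) (M : Matrix (Fin n) (Fin n) ℝ) (x : Fin n → ℝ) :
    x ⬝ᵥ (Matrix.diagonal d * M * Matrix.diagonal d).mulVec x
      = (fun i => d i * x i) ⬝ᵥ M.mulVec (fun i => d i * x i) := by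
  simp only [Matrix.mulVec, dotProduct]
  refine Finset.sum_congr rfl fun i _ => ?_
  rw [Finset.mul_sum, Finset.mul_sum]
  refine Finset.sum_congr rfl fun j _ => ?_
  simp [Matrix.mul_apply, Matrix.diagonal_apply, Finset.sum_mul, Finset.mul_sum,
    Finset.sum_ite_eq, Finset.sum_ite_eq']
  ring

private lemma abs_mul_abs_le_dp (x : Fin n → ℝ) (i j : Fin n) : |x i| * |x j| ≤ x ⬝ᵥ x := by
  have hi : x i * x i ≤ x ⬝ᵥ x :=
    Finset.single_le_sum (fun k _ => mul_self_nonneg (x k)) (Finset.mem_univ i)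
  have hj : x j * x j ≤ x ⬝ᵥ x :=
    Finset.single_le_sum (fun k _ => mul_self_nonneg (x k)) (Finset.mem_univ j)
  nlinarith [sq_nonneg (|x i| - |x j|), sq_abs (x i), sq_abs (x j),
    abs_nonneg (x i), abs_nonneg (x j)]

private lemma rayleigh_le (M : Matrix (Fin n) (Fin n) ℝ) {x : Fin n → ℝ} (hx : x ≠ 0) :
    (x ⬝ᵥ M.mulVec x) / (x ⬝ᵥ x) ≤ ∑ i, ∑ j, |M i j| := by
  rw [div_le_iff₀ (dp_self_pos hx), Finset.sum_mul]
  simp only [Matrix.mulVec, dotProduct]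
  calc ∑ i, x i * ∑ j, M i j * x j = ∑ i, ∑ j, x i * (M i j * x j) := by
        simp [Finset.mul_sum]
    _ ≤ ∑ i, ∑ j, |M i j| * (x ⬝ᵥ x) := by
        refine Finset.sum_le_sum fun i _ => Finset.sum_le_sum fun j _ => ?_
        calc x i * (M i j * x j) ≤ |x i * (M i j * x j)| := le_abs_self _
          _ = |M i j| * (|x i| * |x j|) := by rw [abs_mul, abs_mul]; ring
          _ ≤ |M i j| * (x ⬝ᵥ x) :=
            mul_le_mul_of_nonneg_left (abs_mul_abs_le_dp x i j) (abs_nonneg _)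
    _ = ∑ i, (∑ j, |M i j|) * (x ⬝ᵥ x) := by simp [Finset.sum_mul]

private lemma bddAbove_rayleigh (M : Matrix (Fin n) (Fin n) ℝ) (U : Submodule ℝ (Fin n → ℝ)) :
    BddAbove (Set.range fun x : {x : Fin n → ℝ // x ∈ U ∧ x ≠ 0} =>
      (x.1 ⬝ᵥ M.mulVec x.1) / (x.1 ⬝ᵥ x.1)) := by
  refine ⟨∑ i, ∑ j, |M i j|, ?_⟩
  rintro _ ⟨⟨x, hxU, hx⟩, rfl⟩
  exact rayleigh_le M hx

private lemma nonempty_of_rank_two (U : Submodule ℝ (Fin n → ℝ))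
    (hU : Module.finrank ℝ U = 2) : Nonempty {x : Fin n → ℝ // x ∈ U ∧ x ≠ 0} := by
  have hne : U ≠ ⊥ := by
    intro h; rw [h] at hU; simp [finrank_bot ℝ] at hU
  obtain ⟨x, hx, hx0⟩ := Submodule.exists_mem_ne_zero_of_ne_bot hne
  exact ⟨⟨x, hx, hx0⟩⟩

end aux

/-- for a symmetric PSD matrix `S` and diagonal matrices with positive
diagonals `D_S ⪯ D_C` (entrywise on the diagonal),
`λ₂(D_S^{-1/2} S D_S^{-1/2}) ≥ λ₂(D_C^{-1/2} S D_C^{-1/2})`. -/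
theorem lambda2_monotone_in_normalization (n : ℕ)
    (S : Matrix (Fin n) (Fin n) ℝ) (hS : S.PosSemidef)
    (dS dC : Fin n → ℝ) (hdS : ∀ i, 0 < dS i) (hdC : ∀ i, 0 < dC i)
    (hle : ∀ i, dS i ≤ dC i) :
    lambda2 (Matrix.diagonal (fun i => (Real.sqrt (dS i))⁻¹) * S
        * Matrix.diagonal (fun i => (Real.sqrt (dS i))⁻¹))
      ≥ lambda2 (Matrix.diagonal (fun i => (Real.sqrt (dC i))⁻¹) * S
        * Matrix.diagonal (fun i => (Real.sqrt (dC i))⁻¹)) := by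
  classical
  set A := Matrix.diagonal (fun i => (Real.sqrt (dS i))⁻¹) * S
      * Matrix.diagonal (fun i => (Real.sqrt (dS i))⁻¹) with hA
  set B := Matrix.diagonal (fun i => (Real.sqrt (dC i))⁻¹) * S
      * Matrix.diagonal (fun i => (Real.sqrt (dC i))⁻¹) with hB
  -- positivity facts about the square roots
  have hsS : ∀ i, (0:ℝ) < Real.sqrt (dS i) := fun i => Real.sqrt_pos.mpr (hdS i)
  have hsC : ∀ i, (0:ℝ) < Real.sqrt (dC i) := fun i => Real.sqrt_pos.mpr (hdC i)
  -- the scaling coefficients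
  set c : Fin n → ℝ := fun i => Real.sqrt (dC i) * (Real.sqrt (dS i))⁻¹ with hc
  have hc1 : ∀ i, 1 ≤ c i := by
    intro i
    show (1:ℝ) ≤ Real.sqrt (dC i) * (Real.sqrt (dS i))⁻¹
    rw [← div_eq_mul_inv, le_div_iff₀ (hsS i), one_mul]
    exact Real.sqrt_le_sqrt (hle i)
  have hc0 : ∀ i, c i ≠ 0 := fun i =>
    (mul_pos (hsC i) (inv_pos.mpr (hsS i))).ne'
  -- the scaling linear equivalence
  let e : (Fin n → ℝ) ≃ₗ[ℝ] (Fin n → ℝ) :=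
    LinearEquiv.piCongrRight fun i => LinearEquiv.smulOfNeZero ℝ ℝ (c i) (hc0 i)
  have he : ∀ (x : Fin n → ℝ) (i : Fin n), e x i = c i * x i := fun x i => rfl
  -- quadratic forms agree under the scaling
  have hvec : ∀ x : Fin n → ℝ,
      (fun i => (Real.sqrt (dC i))⁻¹ * (e x) i) = (fun i => (Real.sqrt (dS i))⁻¹ * x i) := by
    intro x
    funext i
    rw [he]
    show (Real.sqrt (dC i))⁻¹ * (Real.sqrt (dC i) * (Real.sqrt (dS i))⁻¹ * x i)
        = (Real.sqrt (dS i))⁻¹ * x i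
    field_simp
    exact mul_div_mul_left _ _ (hsC i).ne'
  have hquad : ∀ x : Fin n → ℝ, x ⬝ᵥ A.mulVec x = (e x) ⬝ᵥ B.mulVec (e x) := by
    intro x
    rw [hA, hB, quad_eq, quad_eq, hvec x]
  -- B-quadratic form is nonneg
  have hBpsd : ∀ y : Fin n → ℝ, 0 ≤ y ⬝ᵥ B.mulVec y := by
    intro y
    rw [hB, quad_eq]
    simpa using hS.dotProduct_mulVec_nonneg (fun i => (Real.sqrt (dC i))⁻¹ * y i)
  -- norms grow under the scaling
  have hnorm : ∀ x : Fin n → ℝ, x ⬝ᵥ x ≤ (e x) ⬝ᵥ (e x) := by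
    intro x
    refine Finset.sum_le_sum fun i _ => ?_
    rw [he]
    have h2 : 1 ≤ c i * c i := by nlinarith [hc1 i]
    nlinarith [mul_self_nonneg (x i), h2]
  -- main comparison of Rayleigh quotients
  have hray : ∀ x : Fin n → ℝ, x ≠ 0 →
      ((e x) ⬝ᵥ B.mulVec (e x)) / ((e x) ⬝ᵥ (e x)) ≤ (x ⬝ᵥ A.mulVec x) / (x ⬝ᵥ x) := by
    intro x hx
    rw [hquad x]
    exact div_le_div_of_nonneg_left (hBpsd (e x)) (dp_self_pos hx) (hnorm x)
  -- now the min-max argument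
  cases isEmpty_or_nonempty {U : Submodule ℝ (Fin n → ℝ) // Module.finrank ℝ U = 2} with
  | inl h =>
      unfold lambda2
      rw [iInf_of_isEmpty, iInf_of_isEmpty]
  | inr h =>
      unfold lambda2
      -- the infimum on the C-side is bounded below by 0
      have hbdd : BddBelow (Set.range fun U : {U : Submodule ℝ (Fin n → ℝ) //
          Module.finrank ℝ U = 2} =>
          ⨆ x : {x : Fin n → ℝ // x ∈ U.1 ∧ x ≠ 0},
            (x.1 ⬝ᵥ B.mulVec x.1) / (x.1 ⬝ᵥ x.1)) := by
        refine ⟨0, ?_⟩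
        rintro _ ⟨⟨V, hV⟩, rfl⟩
        obtain ⟨⟨y, hyV, hy0⟩⟩ := nonempty_of_rank_two V hV
        refine le_trans ?_ (le_ciSup (bddAbove_rayleigh B V) ⟨y, hyV, hy0⟩)
        exact div_nonneg (hBpsd y) (dp_self_pos hy0).le
      refine le_ciInf fun U => ?_
      obtain ⟨U, hU⟩ := U
      haveI := nonempty_of_rank_two U hU
      set V : Submodule ℝ (Fin n → ℝ) := U.map (e : (Fin n → ℝ) →ₗ[ℝ] (Fin n → ℝ)) with hV
      have hVrank : Module.finrank ℝ V = 2 := by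
        rw [hV, LinearEquiv.finrank_map_eq]; exact hU
      haveI := nonempty_of_rank_two V hVrank
      refine le_trans (ciInf_le hbdd ⟨V, hVrank⟩) ?_
      refine ciSup_le fun y => ?_
      obtain ⟨y, hyV, hy0⟩ := y
      obtain ⟨x, hxU, hxy⟩ := Submodule.mem_map.mp hyV
      have hx0 : x ≠ 0 := by
        rintro rfl
        exact hy0 (by rw [← hxy]; simp)
      have : (y ⬝ᵥ B.mulVec y) / (y ⬝ᵥ y) ≤ (x ⬝ᵥ A.mulVec x) / (x ⬝ᵥ x) := by
        rw [← hxy]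
        exact hray x hx0
      exact le_trans this (le_ciSup (bddAbove_rayleigh A U) ⟨x, hxU, hx0⟩)
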